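/- arXiv:1407.1190 — 4 statements merged into one kernel-verified Lean document; each statement's English description precedes it below -/
import Mathlib

section
/- Let f : ℝ → ℝ be continuous and differentiable at 0, let θ > 2, and suppose the AR condition with exponent θ holds: 0 < θ·F(u) ≤ u·f(u) for all u ≠ 0. Then f(0) = 0 and f′(0) = 0. -/
open MeasureTheory

/-- The primitive `F(u) = ∫₀ᵘ f(s) ds`. -/
noncomputable def primitive (f : ℝ → ℝ) (u : ℝ) : ℝ := ∫ s in (0:ℝ)..u, f s

theorem ar_implies_f0_and_deriv0 (f : ℝ → ℝ) (hf : Continuous f)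
    (hdiff : DifferentiableAt ℝ f 0) (θ : ℝ) (hθ : 2 < θ)
    (hAR : ∀ u : ℝ, u ≠ 0 → 0 < θ * primitive f u ∧ θ * primitive f u ≤ u * f u) :
    f 0 = 0 ∧ deriv f 0 = 0 := by
  have hθ0 : (0:ℝ) < θ := by linarith
  have hF0 : primitive f 0 = 0 := by simp [primitive]
  have hFpos : ∀ u : ℝ, u ≠ 0 → 0 < primitive f u := by
    intro u hu
    have h := (hAR u hu).1
    nlinarith
  have hderivF : ∀ x : ℝ, HasDerivAt (primitive f) (f x) x := fun x =>
    (hf.integral_hasStrictDerivAt 0 x).hasDerivAt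
  -- local (global) min of F at 0
  have hmin : IsLocalMin (primitive f) 0 := by
    apply Filter.Eventually.of_forall
    intro x
    rcases eq_or_ne x 0 with rfl | hx
    · exact le_refl _
    · rw [hF0]; exact (hFpos x hx).le
  have hf0 : f 0 = 0 := hmin.hasDerivAt_eq_zero (hderivF 0)
  refine ⟨hf0, ?_⟩
  set a := deriv f 0 with ha
  have hd : HasDerivAt f a 0 := hdiff.hasDerivAt
  have hslope : Filter.Tendsto (fun u => f u / u) (nhdsWithin 0 {(0:ℝ)}ᶜ) (nhds a) := by
    have := hasDerivAt_iff_tendsto_slope.mp hd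
    refine this.congr' ?_
    filter_upwards [self_mem_nhdsWithin] with u hu
    simp [slope, hf0, div_eq_inv_mul]
  -- a ≥ 0
  have hage : 0 ≤ a := by
    refine ge_of_tendsto hslope ?_
    filter_upwards [self_mem_nhdsWithin] with u hu
    have hu' : u ≠ 0 := hu
    have h1 := (hAR u hu').1
    have h2 := (hAR u hu').2
    have huf : 0 < u * f u := lt_of_lt_of_le h1 h2
    have : 0 < f u / u := by
      rcases lt_or_gt_of_ne hu' with h | h
      · have : f u < 0 := by nlinarith
        exact div_pos_of_neg_of_neg this h
      · have : 0 < f u := by nlinarith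
        exact div_pos this h
    exact this.le
  -- a ≤ 0
  have hale : a ≤ 0 := by
    by_contra hc
    push_neg at hc
    obtain ⟨ε, hε⟩ : ∃ ε : ℝ, ε = a * (θ - 2) / (2 * (θ + 2)) := ⟨_, rfl⟩
    have hεpos : 0 < ε := by
      rw [hε]
      apply div_pos
      · nlinarith
      · nlinarith
    have hεa : ε < a := by
      rw [hε, div_lt_iff₀ (by nlinarith : (0:ℝ) < 2 * (θ + 2))]
      nlinarith
    have hev : ∀ᶠ u in nhdsWithin 0 {(0:ℝ)}ᶜ, |f u / u - a| < ε := by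
      have := Metric.tendsto_nhds.mp hslope ε hεpos
      simpa [Real.dist_eq] using this
    rw [eventually_nhdsWithin_iff, Metric.eventually_nhds_iff] at hev
    obtain ⟨δ, hδpos, hδ⟩ := hev
    set u : ℝ := δ / 2 with hu
    have hupos : 0 < u := by positivity
    have hbound : ∀ s : ℝ, s ≠ 0 → |s| < δ → |f s / s - a| < ε := by
      intro s hs hsd
      exact hδ (by simpa [Real.dist_eq] using hsd) hs
    -- lower bound on F u
    have hle : ∀ s ∈ Set.Icc (0:ℝ) u, (a - ε) * s ≤ f s := by
      intro s hs
      rcases eq_or_lt_of_le hs.1 with rfl | hs0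
      · simp [hf0]
      · have hsd : |s| < δ := by
          rw [abs_of_pos hs0]
          calc s ≤ u := hs.2
          _ < δ := by rw [hu]; linarith
        have h := hbound s (ne_of_gt hs0) hsd
        have h1 : a - ε < f s / s := by
          have := abs_lt.mp h
          linarith [this.1]
        calc (a - ε) * s ≤ (f s / s) * s := by nlinarith
        _ = f s := by field_simp
    have hFlb : (a - ε) * (u ^ 2 / 2) ≤ primitive f u := by
      have hint : (∫ s in (0:ℝ)..u, (a - ε) * s) ≤ ∫ s in (0:ℝ)..u, f s := by
        apply intervalIntegral.integral_mono_on hupos.le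
        · exact (continuous_const.mul continuous_id).intervalIntegrable 0 u
        · exact hf.intervalIntegrable 0 u
        · exact hle
      have hcalc : (∫ s in (0:ℝ)..u, (a - ε) * s) = (a - ε) * (u ^ 2 / 2) := by
        rw [intervalIntegral.integral_const_mul, integral_id]
        ring
      rw [← hcalc]; exact hint
    -- upper bound on f u
    have hfub : f u ≤ (a + ε) * u := by
      have h := hbound u (ne_of_gt hupos) (by rw [abs_of_pos hupos, hu]; linarith)
      have h2 : f u / u < a + ε := by
        have := abs_lt.mp h
        linarith [this.2]
      calc f u = (f u / u) * u := by field_simp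
      _ ≤ (a + ε) * u := by nlinarith
    have hARu := (hAR u (ne_of_gt hupos)).2
    have hkey : θ * ((a - ε) * (u ^ 2 / 2)) ≤ (a + ε) * u ^ 2 := by
      calc θ * ((a - ε) * (u ^ 2 / 2)) ≤ θ * primitive f u := by
            apply mul_le_mul_of_nonneg_left hFlb hθ0.le
      _ ≤ u * f u := hARu
      _ ≤ u * ((a + ε) * u) := by nlinarith
      _ = (a + ε) * u ^ 2 := by ring
    -- derive contradiction: θ(a-ε)/2 > a+ε with our choice of ε
    have hu2 : 0 < u ^ 2 := by positivity
    have : θ * (a - ε) / 2 ≤ a + ε := by nlinarith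
    have hcontra : a + ε < θ * (a - ε) / 2 := by
      have h2 : (0:ℝ) < θ + 2 := by linarith
      have hεeq : ε * (2 * (θ + 2)) = a * (θ - 2) := by
        rw [hε]; field_simp
      nlinarith [mul_pos (mul_pos hc (sub_pos.mpr hθ)) h2, mul_pos hεpos h2]
    linarith
  linarith
end

section
/- Let f : ℝ → ℝ be differentiable with f(u)/u < f′(u) for all u ≠ 0, let θ > 2, and suppose the AR condition with exponent θ holds: 0 < θ·F(u) ≤ u·f(u) for all u ≠ 0, where F(u) := ∫₀ᵘ f(s) ds. Then for every real w ≠ 0 and every A > 0 there exists a unique t > 0 such that f(t·w)·w = t·A. -/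
open MeasureTheory Filter Set

lemma primitive_hasDerivAt {f : ℝ → ℝ} (hf : Continuous f) (u : ℝ) :
    HasDerivAt (primitive f) (f u) u :=
  (hf.integral_hasStrictDerivAt 0 u).hasDerivAt

lemma fpos {f : ℝ → ℝ} {θ : ℝ} (hθ : 2 < θ)
    (hAR : ∀ u : ℝ, u ≠ 0 → 0 < θ * primitive f u ∧ θ * primitive f u ≤ u * f u) :
    ∀ u : ℝ, 0 < u → 0 < f u := by
  intro u hu
  obtain ⟨h1, h2⟩ := hAR u hu.ne'
  nlinarith

lemma hmono {f : ℝ → ℝ} (hf : Differentiable ℝ f)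
    (hc : ∀ u : ℝ, u ≠ 0 → f u / u < deriv f u) :
    StrictMonoOn (fun u => f u / u) (Ioi 0) := by
  apply strictMonoOn_of_deriv_pos (convex_Ioi 0)
  · exact hf.continuous.continuousOn.div continuousOn_id (fun x hx => ne_of_gt hx)
  · intro x hx
    rw [interior_Ioi] at hx
    have hx0 : (0:ℝ) < x := hx
    have hd : HasDerivAt (fun u => f u / u) ((deriv f x * x - f x * 1) / x ^ 2) x :=
      ((hf x).hasDerivAt).div (hasDerivAt_id x) hx0.ne'
    rw [hd.deriv]
    have h := hc x hx0.ne'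
    rw [div_lt_iff₀ hx0] at h
    apply div_pos (by nlinarith) (by positivity)

lemma fzero {f : ℝ → ℝ} (hf : Differentiable ℝ f) {θ : ℝ} (hθ : 2 < θ)
    (hAR : ∀ u : ℝ, u ≠ 0 → 0 < θ * primitive f u ∧ θ * primitive f u ≤ u * f u) :
    f 0 = 0 := by
  have hF0 : primitive f 0 = 0 := intervalIntegral.integral_same
  have hmin : IsLocalMin (primitive f) 0 := by
    apply Filter.Eventually.of_forall
    intro u
    rcases eq_or_ne u 0 with h | h
    · simp [h]
    · have h1 := (hAR u h).1
      rw [hF0]; nlinarith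
  have := hmin.deriv_eq_zero
  rwa [(primitive_hasDerivAt hf.continuous 0).deriv] at this

lemma slope_tendsto {f : ℝ → ℝ} (hf : Differentiable ℝ f) {θ : ℝ} (hθ : 2 < θ)
    (hAR : ∀ u : ℝ, u ≠ 0 → 0 < θ * primitive f u ∧ θ * primitive f u ≤ u * f u) :
    Tendsto (fun u => f u / u) (nhdsWithin 0 {x | x ≠ 0}) (nhds (deriv f 0)) := by
  have h := (hf 0).hasDerivAt
  rw [hasDerivAt_iff_tendsto_slope] at h
  have h0 : f 0 = 0 := fzero hf hθ hAR
  refine h.congr' ?_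
  filter_upwards [self_mem_nhdsWithin] with u hu
  simp [slope_def_field, h0, div_eq_inv_mul]


lemma deriv_f_zero {f : ℝ → ℝ} (hf : Differentiable ℝ f)
    (hc : ∀ u : ℝ, u ≠ 0 → f u / u < deriv f u) {θ : ℝ} (hθ : 2 < θ)
    (hAR : ∀ u : ℝ, u ≠ 0 → 0 < θ * primitive f u ∧ θ * primitive f u ≤ u * f u) :
    deriv f 0 = 0 := by
  set c := deriv f 0 with hc0
  have hright : Tendsto (fun u => f u / u) (nhdsWithin 0 (Ioi 0)) (nhds c) :=
    (slope_tendsto hf hθ hAR).mono_left (nhdsWithin_mono _ (fun x hx => ne_of_gt hx))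
  have hcnn : 0 ≤ c := by
    refine ge_of_tendsto hright ?_
    filter_upwards [self_mem_nhdsWithin] with u hu
    have := fpos hθ hAR u hu
    exact le_of_lt (div_pos this hu)
  rcases hcnn.eq_or_lt with h | hcpos
  · exact h.symm
  exfalso
  -- for every s > 0, c ≤ f s / s
  have hge : ∀ s : ℝ, 0 < s → c ≤ f s / s := by
    intro s hs
    refine le_of_tendsto hright ?_
    filter_upwards [Ioo_mem_nhdsGT_of_mem ⟨le_refl 0, hs⟩] with u hu
    exact le_of_lt (hmono hf hc hu.1 hs hu.2)
  -- pick u > 0 with f u / u < c + c*(θ-2)/4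
  have hε : (0:ℝ) < c * (θ - 2) / 4 := by nlinarith
  obtain ⟨u, hu1, hu0⟩ :=
    ((hright.eventually_lt_const (by linarith : c < c + c * (θ - 2) / 4)).and
      self_mem_nhdsWithin).exists
  have hu0 : (0:ℝ) < u := hu0
  -- F u ≥ c*u^2/2
  have hFlow : c * u ^ 2 / 2 ≤ primitive f u := by
    have hint : ∫ s in (0:ℝ)..u, c * s ≤ ∫ s in (0:ℝ)..u, f s := by
      apply intervalIntegral.integral_mono_on hu0.le
      · exact (continuous_const.mul continuous_id).intervalIntegrable _ _
      · exact hf.continuous.intervalIntegrable _ _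
      · intro s hs
        rcases hs.1.eq_or_lt with h | h
        · simp [← h, fzero hf hθ hAR]
        · have := hge s h
          rw [le_div_iff₀ h] at this
          linarith
    have : ∫ s in (0:ℝ)..u, c * s = c * u ^ 2 / 2 := by
      rw [intervalIntegral.integral_const_mul, integral_id]
      ring
    rw [this] at hint
    exact hint.trans_eq rfl
  have hAR2 := (hAR u hu0.ne').2
  rw [div_lt_iff₀ hu0] at hu1
  nlinarith [sq_nonneg u, hu0]


lemma slope_atTop {f : ℝ → ℝ} (hf : Differentiable ℝ f) {θ : ℝ} (hθ : 2 < θ)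
    (hAR : ∀ u : ℝ, u ≠ 0 → 0 < θ * primitive f u ∧ θ * primitive f u ≤ u * f u) :
    Tendsto (fun u => f u / u) atTop atTop := by
  set F := primitive f with hF
  have hθ0 : (0:ℝ) < θ := by linarith
  -- G = F(u) * u^(-θ) is monotone on [1, ∞)
  have hGmono : MonotoneOn (fun u => F u * u ^ (-θ)) (Ici 1) := by
    apply monotoneOn_of_deriv_nonneg (convex_Ici 1)
    · apply ContinuousOn.mul
      · exact (fun x _ => ((primitive_hasDerivAt hf.continuous x).continuousAt).continuousWithinAt)
      · intro x hx
        exact (Real.continuousAt_rpow_const x _ (Or.inl (by simp at hx; positivity))).continuousWithinAt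
    · rw [interior_Ici]
      intro x hx
      exact (((primitive_hasDerivAt hf.continuous x).mul
        (Real.hasDerivAt_rpow_const (Or.inl (by simp at hx; positivity)))).differentiableAt).differentiableWithinAt
    · rw [interior_Ici]
      intro x hx
      have hx1 : (1:ℝ) < x := hx
      have hx0 : (0:ℝ) < x := by linarith
      have hd : HasDerivAt (fun u => F u * u ^ (-θ))
          (f x * x ^ (-θ) + F x * (-θ * x ^ (-θ - 1))) x :=
        (primitive_hasDerivAt hf.continuous x).mul
          (Real.hasDerivAt_rpow_const (Or.inl hx0.ne'))
      rw [hd.deriv]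
      have hsplit : x ^ (-θ) = x ^ (-θ - 1) * x := by
        rw [← Real.rpow_add_one hx0.ne' (-θ - 1)]
        ring_nf
      have har := (hAR x hx0.ne').2
      have hrp : (0:ℝ) ≤ x ^ (-θ - 1) := Real.rpow_nonneg hx0.le _
      rw [hsplit]
      nlinarith
  -- hence F u ≥ F 1 * u ^ θ for u ≥ 1
  have hF1 : 0 < F 1 := by
    have := (hAR 1 one_ne_zero).1
    nlinarith
  have hFlow : ∀ u : ℝ, 1 ≤ u → F 1 * u ^ θ ≤ F u := by
    intro u hu
    have h := hGmono (mem_Ici.mpr (le_refl 1)) (mem_Ici.mpr hu) hu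
    have hu0 : (0:ℝ) < u := by linarith
    simp only [Real.one_rpow, mul_one] at h
    have h2 : F 1 * u ^ θ ≤ F u * u ^ (-θ) * u ^ θ := by
      have : (0:ℝ) < u ^ θ := Real.rpow_pos_of_pos hu0 _
      nlinarith
    rwa [mul_assoc, ← Real.rpow_add hu0, neg_add_cancel, Real.rpow_zero, mul_one] at h2
  -- so f u / u ≥ θ * F 1 * u ^ (θ - 2)
  have hbound : ∀ u : ℝ, 1 ≤ u → θ * F 1 * u ^ (θ - 2) ≤ f u / u := by
    intro u hu
    have hu0 : (0:ℝ) < u := by linarith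
    have har := (hAR u hu0.ne').2
    have h1 := hFlow u hu
    have hsq : u ^ θ = u ^ (θ - 2) * (u * u) := by
      rw [show u * u = u ^ (2:ℝ) by rw [show (2:ℝ) = ((2:ℕ):ℝ) by norm_num, Real.rpow_natCast]; ring,
        ← Real.rpow_add hu0]
      ring_nf
    rw [le_div_iff₀ hu0]
    have hrp : (0:ℝ) < u ^ (θ - 2) := Real.rpow_pos_of_pos hu0 _
    have hchain : θ * (F 1 * u ^ θ) ≤ u * f u := le_trans (by nlinarith) har
    rw [hsq] at hchain
    nlinarith
  have htend : Tendsto (fun u : ℝ => θ * F 1 * u ^ (θ - 2)) atTop atTop := by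
    apply Tendsto.const_mul_atTop (by positivity)
    exact tendsto_rpow_atTop (by linarith)
  exact tendsto_atTop_mono' atTop (by filter_upwards [eventually_ge_atTop 1] with u hu using hbound u hu) htend


lemma aux_pos {f : ℝ → ℝ} (hf : Differentiable ℝ f)
    (hc : ∀ u : ℝ, u ≠ 0 → f u / u < deriv f u)
    {θ : ℝ} (hθ : 2 < θ)
    (hAR : ∀ u : ℝ, u ≠ 0 → 0 < θ * primitive f u ∧ θ * primitive f u ≤ u * f u)
    (w A : ℝ) (hw : 0 < w) (hA : 0 < A) :
    ∃! t : ℝ, 0 < t ∧ f (t * w) * w = t * A := by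
  have hw2 : (0:ℝ) < w ^ 2 := by positivity
  have hmap : Tendsto (fun t : ℝ => t * w) (nhdsWithin 0 (Ioi 0)) (nhdsWithin 0 (Ioi 0)) := by
    rw [tendsto_nhdsWithin_iff]
    constructor
    · have h : Tendsto (fun t : ℝ => t * w) (nhds 0) (nhds (0 * w)) :=
        (continuous_id.mul continuous_const).tendsto 0
      simpa using h.mono_left nhdsWithin_le_nhds
    · filter_upwards [self_mem_nhdsWithin] with t ht
      exact mul_pos ht hw
  have hsl : Tendsto (fun t : ℝ => f (t * w) / (t * w)) (nhdsWithin 0 (Ioi 0)) (nhds 0) := by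
    have h := (slope_tendsto hf hθ hAR).comp
      (hmap.mono_right (nhdsWithin_mono _ (fun x hx => ne_of_gt hx)))
    rwa [deriv_f_zero hf hc hθ hAR] at h
  have hsmall : ∀ᶠ t in nhdsWithin (0:ℝ) (Ioi 0), f (t * w) * w < t * A := by
    have h2 : Tendsto (fun t : ℝ => f (t * w) / (t * w) * w ^ 2)
        (nhdsWithin 0 (Ioi 0)) (nhds 0) := by simpa using hsl.mul_const (w ^ 2)
    filter_upwards [h2.eventually_lt_const hA, self_mem_nhdsWithin] with t h1 ht
    have htw : 0 < t * w := mul_pos ht hw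
    rw [div_mul_eq_mul_div, div_lt_iff₀ htw] at h1
    nlinarith
  have hbig : ∃ t1 : ℝ, 0 < t1 ∧ t1 * A < f (t1 * w) * w := by
    have hcomp : Tendsto (fun t : ℝ => f (t * w) / (t * w)) atTop atTop :=
      (slope_atTop hf hθ hAR).comp (tendsto_id.atTop_mul_const hw)
    obtain ⟨t1, h1, h2⟩ := ((hcomp.eventually_gt_atTop (A / w ^ 2)).and
      (eventually_gt_atTop 0)).exists
    refine ⟨t1, h2, ?_⟩
    have htw : 0 < t1 * w := mul_pos h2 hw
    rw [div_lt_div_iff₀ hw2 htw] at h1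
    nlinarith
  obtain ⟨t1, ht1, hbig1⟩ := hbig
  have hlt : ∀ᶠ t in nhdsWithin (0:ℝ) (Ioi 0), t < t1 :=
    (gt_mem_nhds ht1 : ∀ᶠ t in nhds (0:ℝ), t < t1).filter_mono nhdsWithin_le_nhds
  obtain ⟨t0, ⟨hsm0, ht0pos⟩, ht01⟩ :=
    ((hsmall.and self_mem_nhdsWithin).and hlt).exists
  have hcont : Continuous (fun t : ℝ => f (t * w) * w - t * A) := by
    apply Continuous.sub
    · exact (hf.continuous.comp (continuous_id.mul continuous_const)).mul continuous_const
    · exact continuous_id.mul continuous_const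
  obtain ⟨t, htmem, hteq⟩ := intermediate_value_Icc (le_of_lt ht01) hcont.continuousOn
    (show (0:ℝ) ∈ Icc (f (t0 * w) * w - t0 * A) (f (t1 * w) * w - t1 * A) from
      ⟨by linarith [hsm0], by linarith [hbig1]⟩)
  have htpos : 0 < t := lt_of_lt_of_le (ht0pos : (0:ℝ) < t0) htmem.1
  have hteq' : f (t * w) * w = t * A := by
    have h := hteq
    simp only at h
    linarith
  have key : ∀ a b : ℝ, 0 < a → 0 < b → f (a * w) * w = a * A → f (b * w) * w = b * A →
      a = b := by
    intro a b ha hb hea heb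
    have h1 : f (a * w) / (a * w) = A / w ^ 2 := by
      rw [div_eq_div_iff (ne_of_gt (mul_pos ha hw)) (ne_of_gt hw2)]
      nlinarith [hea]
    have h2 : f (b * w) / (b * w) = A / w ^ 2 := by
      rw [div_eq_div_iff (ne_of_gt (mul_pos hb hw)) (ne_of_gt hw2)]
      nlinarith [heb]
    have := (hmono hf hc).injOn (mem_Ioi.mpr (mul_pos ha hw)) (mem_Ioi.mpr (mul_pos hb hw))
      (h1.trans h2.symm)
    exact mul_right_cancel₀ hw.ne' this
  exact ⟨t, ⟨htpos, hteq'⟩, fun s hs => key s t hs.1 htpos hs.2 hteq'⟩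


theorem unique_nehari_projection (f : ℝ → ℝ) (hf : Differentiable ℝ f)
    (hc : ∀ u : ℝ, u ≠ 0 → f u / u < deriv f u)
    (θ : ℝ) (hθ : 2 < θ)
    (hAR : ∀ u : ℝ, u ≠ 0 → 0 < θ * primitive f u ∧ θ * primitive f u ≤ u * f u)
    (w A : ℝ) (hw : w ≠ 0) (hA : 0 < A) :
    ∃! t : ℝ, 0 < t ∧ f (t * w) * w = t * A := by
  rcases hw.lt_or_gt with hneg | hpos
  · set g : ℝ → ℝ := fun u => -f (-u) with hg
    have hgd : Differentiable ℝ g := (hf.comp differentiable_neg).neg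
    have hgderiv : ∀ u : ℝ, deriv g u = deriv f (-u) := by
      intro u
      calc deriv g u = -(deriv (fun x => f (-x)) u) := deriv.neg
        _ = -(-deriv f (-u)) := by rw [deriv_comp_neg]
        _ = deriv f (-u) := neg_neg _
    have hgc : ∀ u : ℝ, u ≠ 0 → g u / u < deriv g u := by
      intro u hu
      have h := hc (-u) (neg_ne_zero.mpr hu)
      rw [hgderiv]
      have : g u / u = f (-u) / (-u) := by
        rw [hg]
        simp only
        rw [neg_div, ← div_neg]
      rw [this]
      exact h
    have hprim : ∀ u : ℝ, primitive g u = primitive f (-u) := by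
      intro u
      show (∫ s in (0:ℝ)..u, -f (-s)) = primitive f (-u)
      rw [intervalIntegral.integral_neg, intervalIntegral.integral_comp_neg]
      rw [show -(0:ℝ) = 0 by norm_num, ← intervalIntegral.integral_symm]
      rfl
    have hgAR : ∀ u : ℝ, u ≠ 0 → 0 < θ * primitive g u ∧ θ * primitive g u ≤ u * g u := by
      intro u hu
      rw [hprim]
      refine ⟨(hAR (-u) (neg_ne_zero.mpr hu)).1, ?_⟩
      have h := (hAR (-u) (neg_ne_zero.mpr hu)).2
      calc θ * primitive f (-u) ≤ (-u) * f (-u) := h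
        _ = u * g u := by rw [hg]; ring
    have H := aux_pos hgd hgc hθ hgAR (-w) A (by linarith) hA
    have hEq : ∀ t : ℝ, (0 < t ∧ g (t * -w) * -w = t * A) ↔
        (0 < t ∧ f (t * w) * w = t * A) := by
      intro t
      have harg : g (t * -w) * -w = f (t * w) * w := by
        rw [hg]
        simp only
        rw [show -(t * -w) = t * w by ring]
        ring
      rw [harg]
    exact (existsUnique_congr hEq).mp H
  · exact aux_pos hf hc hθ hAR w A hpos hA
end

section
/- Let f : ℝ → ℝ be differentiable with f(u)/u < f′(u) for all u ≠ 0, let θ > 2, suppose the AR condition with exponent θ holds: 0 < θ·F(u) ≤ u·f(u) for all u ≠ 0, where F(u) := ∫₀ᵘ f(s) ds, let w ≠ 0 be real and A > 0, and let t* > 0 be the unique positive number with f(t*·w)·w = t*·A. Define h(t) := (t²/2)·A − F(t·w) for t > 0. Then h(t) < h(t*) for every t > 0 with t ≠ t*, and h(t*) ≥ (1/2 − 1/θ)·A·(t*)² > 0. -/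
open MeasureTheory

theorem fibering_functional_strict_max (f : ℝ → ℝ) (hf : Differentiable ℝ f)
    (hc : ∀ u : ℝ, u ≠ 0 → f u / u < deriv f u)
    (θ : ℝ) (hθ : 2 < θ)
    (hAR : ∀ u : ℝ, u ≠ 0 → 0 < θ * primitive f u ∧ θ * primitive f u ≤ u * f u)
    (w A tstar : ℝ) (hw : w ≠ 0) (hA : 0 < A) (htstar : 0 < tstar)
    (heq : f (tstar * w) * w = tstar * A)
    (huniq : ∀ t : ℝ, 0 < t → f (t * w) * w = t * A → t = tstar) :
    (∀ t : ℝ, 0 < t → t ≠ tstar →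
      t ^ 2 / 2 * A - primitive f (t * w)
        < tstar ^ 2 / 2 * A - primitive f (tstar * w)) ∧
    (1 / 2 - 1 / θ) * A * tstar ^ 2
        ≤ tstar ^ 2 / 2 * A - primitive f (tstar * w) ∧
    0 < (1 / 2 - 1 / θ) * A * tstar ^ 2 := by
  have hθ0 : (0:ℝ) < θ := by linarith
  have hcf := hf.continuous
  have hFd : ∀ u : ℝ, HasDerivAt (primitive f) (f u) u := fun u =>
    intervalIntegral.integral_hasDerivAt_right (hcf.intervalIntegrable _ _)
      (hcf.stronglyMeasurableAtFilter _ _) hcf.continuousAt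
  have hww : 0 < w * w := mul_self_pos.mpr hw
  -- the function G(t) = f(tw)·w/t, strictly increasing on (0,∞)
  set G : ℝ → ℝ := fun t => f (t * w) * w / t with hGdef
  have hGd : ∀ t : ℝ, t ≠ 0 → HasDerivAt G
      ((deriv f (t * w) * w * w * t - f (t * w) * w * 1) / t ^ 2) t := by
    intro t ht
    have d1 : HasDerivAt (fun t : ℝ => f (t * w)) (deriv f (t * w) * w) t :=
      ((hf (t * w)).hasDerivAt).comp t (hasDerivAt_mul_const w)
    exact (d1.mul_const w).div (hasDerivAt_id t) ht
  have hGpos : ∀ t : ℝ, 0 < t →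
      0 < (deriv f (t * w) * w * w * t - f (t * w) * w * 1) / t ^ 2 := by
    intro t ht
    apply div_pos _ (by positivity)
    have hu : t * w ≠ 0 := mul_ne_zero (ne_of_gt ht) hw
    have h1 := hc (t * w) hu
    have h2 : f (t * w) * w = f (t * w) / (t * w) * (w * w * t) := by
      field_simp
    have h3 : 0 < (deriv f (t * w) - f (t * w) / (t * w)) * (w * w * t) :=
      mul_pos (sub_pos.mpr h1) (mul_pos hww ht)
    nlinarith [h3, h2]
  have hGcont : ContinuousOn G (Set.Ioi (0:ℝ)) := by
    apply ContinuousOn.div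
    · exact ((hcf.comp (continuous_id.mul continuous_const)).mul continuous_const).continuousOn
    · exact continuousOn_id
    · exact fun t ht => ne_of_gt ht
  have hGmono : StrictMonoOn G (Set.Ioi (0:ℝ)) := by
    apply strictMonoOn_of_deriv_pos (convex_Ioi 0) hGcont
    intro t ht
    rw [interior_Ioi] at ht
    rw [(hGd t (ne_of_gt ht)).deriv]
    exact hGpos t ht
  have hGt : G tstar = A := by
    show f (tstar * w) * w / tstar = A
    rw [heq]
    exact mul_div_cancel_left₀ A (ne_of_gt htstar)
  -- the fibering functional and its derivative
  have hhd : ∀ t : ℝ, HasDerivAt (fun t : ℝ => t ^ 2 / 2 * A - primitive f (t * w))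
      (t * A - f (t * w) * w) t := by
    intro t
    have d1 : HasDerivAt (fun t : ℝ => t ^ 2 / 2 * A) (t * A) t := by
      have : HasDerivAt (fun t : ℝ => t ^ 2 / 2 * A) (((2:ℕ):ℝ) * t ^ (2 - 1) / 2 * A) t :=
        ((hasDerivAt_pow 2 t).div_const 2).mul_const A
      convert this using 1
      norm_num
    have d2 : HasDerivAt (fun t : ℝ => primitive f (t * w)) (f (t * w) * w) t :=
      by have := (hFd (t * w)).comp t (hasDerivAt_mul_const w); exact this
    exact d1.sub d2
  have hhdiff : Differentiable ℝ (fun t : ℝ => t ^ 2 / 2 * A - primitive f (t * w)) :=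
    fun t => (hhd t).differentiableAt
  have hhcont : Continuous (fun t : ℝ => t ^ 2 / 2 * A - primitive f (t * w)) :=
    hhdiff.continuous
  have hGval : ∀ t : ℝ, 0 < t → f (t * w) * w = G t * t := by
    intro t ht
    show f (t * w) * w = f (t * w) * w / t * t
    field_simp
  have hmono : StrictMonoOn (fun t : ℝ => t ^ 2 / 2 * A - primitive f (t * w))
      (Set.Ioc 0 tstar) := by
    apply strictMonoOn_of_deriv_pos (convex_Ioc 0 tstar) hhcont.continuousOn
    intro t ht
    rw [interior_Ioc] at ht
    rw [(hhd t).deriv]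
    have hGlt : G t < A := hGt ▸ hGmono (Set.mem_Ioi.mpr ht.1) (Set.mem_Ioi.mpr htstar) ht.2
    have hv := hGval t ht.1
    nlinarith [mul_pos ht.1 (sub_pos.mpr hGlt)]
  have hanti : StrictAntiOn (fun t : ℝ => t ^ 2 / 2 * A - primitive f (t * w))
      (Set.Ici tstar) := by
    apply strictAntiOn_of_deriv_neg (convex_Ici tstar) hhcont.continuousOn
    intro t ht
    rw [interior_Ici] at ht
    rw [(hhd t).deriv]
    have ht0 : 0 < t := lt_trans htstar ht
    have hGgt : A < G t := hGt ▸ hGmono (Set.mem_Ioi.mpr htstar) (Set.mem_Ioi.mpr ht0) ht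
    have hv := hGval t ht0
    nlinarith [mul_pos ht0 (sub_pos.mpr hGgt)]
  refine ⟨?_, ?_, ?_⟩
  · intro t ht hne
    rcases lt_or_gt_of_ne hne with hlt | hgt
    · exact hmono (Set.mem_Ioc.mpr ⟨ht, le_of_lt hlt⟩)
        (Set.mem_Ioc.mpr ⟨htstar, le_refl _⟩) hlt
    · exact hanti (Set.mem_Ici.mpr (le_refl _)) (Set.mem_Ici.mpr (le_of_lt hgt)) hgt
  · have hu : tstar * w ≠ 0 := mul_ne_zero (ne_of_gt htstar) hw
    have hFle : θ * primitive f (tstar * w) ≤ tstar ^ 2 * A := by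
      calc θ * primitive f (tstar * w) ≤ (tstar * w) * f (tstar * w) := (hAR _ hu).2
        _ = tstar * (f (tstar * w) * w) := by ring
        _ = tstar * (tstar * A) := by rw [heq]
        _ = tstar ^ 2 * A := by ring
    have h1 : primitive f (tstar * w) ≤ tstar ^ 2 * A / θ := by
      rw [le_div_iff₀ hθ0]; linarith
    have h2 : (1 / 2 - 1 / θ) * A * tstar ^ 2 = tstar ^ 2 / 2 * A - tstar ^ 2 * A / θ := by
      field_simp
    linarith
  · have h1 : 1 / θ < 1 / 2 := by
      rw [div_lt_div_iff₀ hθ0 (by norm_num : (0:ℝ) < 2)]; linarith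
    exact mul_pos (mul_pos (sub_pos.mpr h1) hA) (pow_pos htstar 2)
end

section
/- Let (X, μ) be a measure space with 0 < μ(X) < ∞, let q > 2, R > 0, κ > 0, and let w : X → ℝ be measurable with ∫ |w|^q dμ ≤ R^q and ∫ w² dμ ≥ κ. Set ε := (κ/(4·μ(X)))^{1/2} and M := (4·R^q/κ)^{1/(q−2)}. Then ∫_{{x : ε ≤ |w(x)| ≤ M}} w² dμ ≥ κ/2. -/
open MeasureTheory

theorem mass_on_annulus {X : Type*} [MeasurableSpace X] (μ : Measure X)
    (hμ0 : 0 < μ Set.univ) (hμfin : μ Set.univ < ⊤)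
    (q R κ : ℝ) (hq : 2 < q) (hR : 0 < R) (hκ : 0 < κ)
    (w : X → ℝ) (hw : Measurable w)
    (hintq : Integrable (fun x => |w x| ^ q) μ)
    (hint2 : Integrable (fun x => (w x) ^ 2) μ)
    (hq_bound : ∫ x, |w x| ^ q ∂μ ≤ R ^ q)
    (h2_bound : κ ≤ ∫ x, (w x) ^ 2 ∂μ) :
    κ / 2 ≤ ∫ x in {x : X |
        (κ / (4 * (μ Set.univ).toReal)) ^ ((1:ℝ) / 2) ≤ |w x| ∧
        |w x| ≤ (4 * R ^ q / κ) ^ (1 / (q - 2))}, (w x) ^ 2 ∂μ := by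
  set V : ℝ := (μ Set.univ).toReal with hVdef
  have hV : 0 < V := ENNReal.toReal_pos hμ0.ne' hμfin.ne
  set ε : ℝ := (κ / (4 * V)) ^ ((1:ℝ)/2) with hεdef
  set M : ℝ := (4 * R ^ q / κ) ^ (1 / (q - 2)) with hMdef
  have hRq : 0 < R ^ q := Real.rpow_pos_of_pos hR q
  have haux : (0:ℝ) < 4 * R ^ q / κ := by positivity
  have hM : 0 < M := Real.rpow_pos_of_pos haux _
  have hq2 : (0:ℝ) < q - 2 := by linarith
  have hMq : M ^ (q - 2) = 4 * R ^ q / κ := by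
    rw [hMdef, ← Real.rpow_mul haux.le, one_div,
      inv_mul_cancel₀ hq2.ne', Real.rpow_one]
  have hε2 : ε ^ 2 = κ / (4 * V) := by
    rw [hεdef, ← Real.rpow_natCast ((κ / (4 * V)) ^ ((1:ℝ)/2)) 2,
      ← Real.rpow_mul (by positivity)]
    norm_num
  -- the three sets
  set s₁ : Set X := {x | |w x| < ε} with hs₁def
  set s₂ : Set X := {x | ε ≤ |w x| ∧ |w x| ≤ M} with hs₂def
  set s₃ : Set X := {x | M < |w x|} with hs₃def
  have hm₁ : MeasurableSet s₁ := measurableSet_lt hw.abs measurable_const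
  have hm₂ : MeasurableSet s₂ :=
    (measurableSet_le measurable_const hw.abs).inter
      (measurableSet_le hw.abs measurable_const)
  have hm₃ : MeasurableSet s₃ := measurableSet_lt measurable_const hw.abs
  -- pointwise splitting
  have hsplit : ∀ x, (w x) ^ 2 ≤ s₁.indicator (fun x => (w x) ^ 2) x +
      s₂.indicator (fun x => (w x) ^ 2) x + s₃.indicator (fun x => (w x) ^ 2) x := by
    intro x
    have h1 : 0 ≤ s₁.indicator (fun x => (w x) ^ 2) x :=
      Set.indicator_nonneg (fun y _ => sq_nonneg _) x
    have h2 : 0 ≤ s₂.indicator (fun x => (w x) ^ 2) x :=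
      Set.indicator_nonneg (fun y _ => sq_nonneg _) x
    have h3 : 0 ≤ s₃.indicator (fun x => (w x) ^ 2) x :=
      Set.indicator_nonneg (fun y _ => sq_nonneg _) x
    rcases lt_or_ge (|w x|) ε with h | h
    · rw [Set.indicator_of_mem (by exact h : x ∈ s₁)]
      linarith
    · rcases le_or_gt (|w x|) M with h' | h'
      · rw [Set.indicator_of_mem (by exact ⟨h, h'⟩ : x ∈ s₂)]
        linarith
      · rw [Set.indicator_of_mem (by exact h' : x ∈ s₃)]
        linarith
  have hi₁ : Integrable (s₁.indicator (fun x => (w x) ^ 2)) μ := hint2.indicator hm₁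
  have hi₂ : Integrable (s₂.indicator (fun x => (w x) ^ 2)) μ := hint2.indicator hm₂
  have hi₃ : Integrable (s₃.indicator (fun x => (w x) ^ 2)) μ := hint2.indicator hm₃
  have hsum : ∫ x, (w x) ^ 2 ∂μ ≤ (∫ x in s₁, (w x) ^ 2 ∂μ) +
      (∫ x in s₂, (w x) ^ 2 ∂μ) + (∫ x in s₃, (w x) ^ 2 ∂μ) := by
    have h := integral_mono hint2 ((hi₁.add hi₂).add hi₃) hsplit
    rwa [integral_add' (hi₁.add hi₂) hi₃, integral_add' hi₁ hi₂,
      integral_indicator hm₁, integral_indicator hm₂, integral_indicator hm₃] at h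
  -- bound on s₁
  have hb₁ : ∫ x in s₁, (w x) ^ 2 ∂μ ≤ κ / 4 := by
    have hle : ∫ x in s₁, (w x) ^ 2 ∂μ ≤ ∫ _x in s₁, ε ^ 2 ∂μ := by
      apply setIntegral_mono_on hint2.integrableOn (integrableOn_const
        (lt_of_le_of_lt (measure_mono (Set.subset_univ _)) hμfin).ne) hm₁
      intro x hx
      have : |w x| < ε := hx
      have h0 : 0 ≤ |w x| := abs_nonneg _
      calc (w x) ^ 2 = |w x| ^ 2 := (sq_abs _).symm
        _ ≤ ε ^ 2 := by nlinarith
    have hconst : ∫ _x in s₁, ε ^ 2 ∂μ = (μ s₁).toReal * ε ^ 2 := by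
      rw [setIntegral_const, smul_eq_mul, mul_comm]; exact mul_comm _ _
    have hμs : (μ s₁).toReal ≤ V :=
      ENNReal.toReal_mono hμfin.ne (measure_mono (Set.subset_univ _))
    have hεnn : 0 ≤ ε ^ 2 := sq_nonneg _
    calc ∫ x in s₁, (w x) ^ 2 ∂μ ≤ (μ s₁).toReal * ε ^ 2 := by rw [← hconst]; exact hle
      _ ≤ V * ε ^ 2 := mul_le_mul_of_nonneg_right hμs hεnn
      _ = V * (κ / (4 * V)) := by rw [hε2]
      _ = κ / 4 := by field_simp
  -- bound on s₃
  have hb₃ : ∫ x in s₃, (w x) ^ 2 ∂μ ≤ κ / 4 := by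
    have hpt : ∀ x ∈ s₃, (w x) ^ 2 ≤ |w x| ^ q * (κ / (4 * R ^ q)) := by
      intro x hx
      have hxM : M < |w x| := hx
      have hxpos : 0 < |w x| := lt_trans hM hxM
      have hsplitq : |w x| ^ q = |w x| ^ (2:ℝ) * |w x| ^ (q - 2) := by
        rw [← Real.rpow_add hxpos]; ring_nf
      have h2r : |w x| ^ (2:ℝ) = (w x) ^ 2 := by
        rw [show ((2:ℝ)) = ((2:ℕ):ℝ) by norm_num, Real.rpow_natCast, sq_abs]
      have hmono : M ^ (q - 2) ≤ |w x| ^ (q - 2) :=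
        Real.rpow_le_rpow hM.le hxM.le hq2.le
      have key : (w x) ^ 2 * (4 * R ^ q / κ) ≤ |w x| ^ q := by
        rw [hsplitq, h2r, ← hMq]
        exact mul_le_mul_of_nonneg_left hmono (sq_nonneg _)
      have h4 : (0:ℝ) < 4 * R ^ q := by positivity
      rw [← mul_div_assoc, le_div_iff₀ h4]
      calc (w x) ^ 2 * (4 * R ^ q) = ((w x) ^ 2 * (4 * R ^ q / κ)) * κ := by
            field_simp
        _ ≤ |w x| ^ q * κ := mul_le_mul_of_nonneg_right key hκ.le
    have hle : ∫ x in s₃, (w x) ^ 2 ∂μ ≤ ∫ x in s₃, |w x| ^ q * (κ / (4 * R ^ q)) ∂μ :=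
      setIntegral_mono_on hint2.integrableOn
        ((hintq.mul_const _).integrableOn) hm₃ hpt
    have hle2 : ∫ x in s₃, |w x| ^ q * (κ / (4 * R ^ q)) ∂μ ≤
        ∫ x, |w x| ^ q * (κ / (4 * R ^ q)) ∂μ := by
      apply setIntegral_le_integral (hintq.mul_const _)
      filter_upwards with x
      have : 0 ≤ |w x| ^ q := Real.rpow_nonneg (abs_nonneg _) _
      positivity
    have heq : ∫ x, |w x| ^ q * (κ / (4 * R ^ q)) ∂μ =
        (∫ x, |w x| ^ q ∂μ) * (κ / (4 * R ^ q)) := integral_mul_const _ _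
    have hfin : (∫ x, |w x| ^ q ∂μ) * (κ / (4 * R ^ q)) ≤ κ / 4 := by
      have hc : 0 ≤ κ / (4 * R ^ q) := by positivity
      calc (∫ x, |w x| ^ q ∂μ) * (κ / (4 * R ^ q)) ≤ R ^ q * (κ / (4 * R ^ q)) :=
            mul_le_mul_of_nonneg_right hq_bound hc
        _ = κ / 4 := by field_simp
    linarith
  have : κ / 2 ≤ ∫ x in s₂, (w x) ^ 2 ∂μ := by linarith
  exact this
end
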